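/- If a delayed formula χ of HML_srbb distinguishes a process p from a nonempty set Q (with respect to ⟦·⟧^ε) and Q is closed under silent steps (Q ↠ Q), then expr^ε(χ) ∈ Win_a([p,Q]^ε_a) in the weak spectroscopy energy game G△. -/

import Mathlib

open Classical

noncomputable section

namespace Spectroscopy

/-! ### Energies and declining energy games -/

/-- Energies: 8-dimensional vectors over `ℕ ∪ {∞}`, ordered componentwise. -/
abbrev Energy : Type := Fin 8 → ℕ∞

/-- The `i`-th unit vector. -/
def unitE (i : Fin 8) : Energy := fun k => if k = i then 1 else 0

/-- The vector with value `v` at position `i` and `0` elsewhere. -/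
def onlyAt (i : Fin 8) (v : ℕ∞) : Energy := fun k => if k = i then v else 0

/-- Components of energy updates: `-1`, `0`, or minimum selection `min_D`.
For the component at position `k`, `minWith D` selects the minimum over the
positions `{k} ∪ D`, so the requirement `k ∈ D` of the paper holds by
construction. -/
inductive UpdComp : Type
  | decr : UpdComp
  | zero : UpdComp
  | minWith (D : Finset (Fin 8)) : UpdComp
deriving DecidableEq

/-- Energy updates. -/
abbrev Update : Type := Fin 8 → UpdComp

/-- Partial application of an update to an energy (`none` when a component
would become negative). -/
def upd (e : Energy) (u : Update) : Option Energy :=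
  if ∀ k, u k = UpdComp.decr → e k ≠ 0 then
    some (fun k =>
      match u k with
      | UpdComp.decr => e k - 1
      | UpdComp.zero => e k
      | UpdComp.minWith D => (insert k D).inf e)
  else none

/-- A declining energy game: positions, a defender predicate (attacker
positions are the non-defender ones), and moves labeled with updates. -/
structure EGame (Pos : Type) where
  defender : Pos → Prop
  move : Pos → Update → Pos → Prop

/-- Attacker winning budgets `Win_a`: at an attacker position some move must
lead to an attacker-won position under the updated energy; at a defender
position every move must (be defined and) lead to an attacker-won position. -/
inductive EGame.Win {Pos : Type} (G : EGame Pos) : Pos → Energy → Prop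
  | attack {g : Pos} {u : Update} {g' : Pos} {e e' : Energy} :
      ¬ G.defender g → G.move g u g' → upd e u = some e' → G.Win g' e' →
      G.Win g e
  | defend {g : Pos} {e : Energy} :
      G.defender g →
      (∀ u g', G.move g u g' → upd e u ≠ none) →
      (∀ u g' e', G.move g u g' → upd e u = some e' → G.Win g' e') →
      G.Win g e

/-! ### Labeled transition systems with silent steps -/

section LTS

variable {Proc Act : Type}

/-- Weak internal steps `↠`: reflexive-transitive closure of `τ`-steps. -/
def Star (Tr : Proc → Act → Proc → Prop) (τ : Act) : Proc → Proc → Prop :=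
  Relation.ReflTransGen fun p p' => Tr p τ p'

/-- A process is stable if it has no `τ`-step. -/
def Stable (Tr : Proc → Act → Proc → Prop) (τ : Act) (p : Proc) : Prop :=
  ∀ p', ¬ Tr p τ p'

/-- Optional step `p →(α) p'`: a real `α`-step, or `α = τ` and `p = p'`. -/
def OptStep (Tr : Proc → Act → Proc → Prop) (τ : Act) (p : Proc) (α : Act) (p' : Proc) : Prop :=
  Tr p α p' ∨ (α = τ ∧ p = p')

/-- Lift of `→a` to sets. -/
def SetStep (Tr : Proc → Act → Proc → Prop) (Q : Set Proc) (a : Act) (Q' : Set Proc) : Prop :=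
  Q' = {q' | ∃ q ∈ Q, Tr q a q'}

/-- Lift of `↠` to sets. -/
def SetStar (Tr : Proc → Act → Proc → Prop) (τ : Act) (Q Q' : Set Proc) : Prop :=
  Q' = {q' | ∃ q ∈ Q, Star Tr τ q q'}

/-- Lift of `→(α)` to sets. -/
def SetOpt (Tr : Proc → Act → Proc → Prop) (τ : Act) (Q : Set Proc) (α : Act)
    (Q' : Set Proc) : Prop :=
  Q' = {q' | ∃ q ∈ Q, OptStep Tr τ q α q'}

end LTS

/-! ### The logic HML_srbb -/

mutual
/-- Formulas `φ` of HML_srbb: `⟨ε⟩χ` or immediate conjunctions `⋀Ψ`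
(conjunctions are indexed by an arbitrary type). `⊤` is the empty conjunction. -/
inductive Formula (Act : Type) (τ : Act) : Type 1
  | delayed : DFormula Act τ → Formula Act τ
  | conj : (I : Type) → (I → Conjunct Act τ) → Formula Act τ

/-- Delayed formulas `χ`: observations `⟨a⟩φ` (with `a ≠ τ`), standard
conjunctions `⋀Ψ`, stable conjunctions `⋀({¬⟨τ⟩⊤} ∪ Ψ)`, and branching
conjunctions `⋀({(α)φ} ∪ Ψ)`. -/
inductive DFormula (Act : Type) (τ : Act) : Type 1
  | obs : (a : Act) → a ≠ τ → Formula Act τ → DFormula Act τ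
  | conj : (I : Type) → (I → Conjunct Act τ) → DFormula Act τ
  | stableConj : (I : Type) → (I → Conjunct Act τ) → DFormula Act τ
  | branchConj : (α : Act) → Formula Act τ → (I : Type) → (I → Conjunct Act τ) → DFormula Act τ

/-- Conjuncts `ψ`: positive `⟨ε⟩χ` or negative `¬⟨ε⟩χ`. -/
inductive Conjunct (Act : Type) (τ : Act) : Type 1
  | pos : DFormula Act τ → Conjunct Act τ
  | neg : DFormula Act τ → Conjunct Act τ
end

section Semantics

variable {Proc Act : Type}

mutual
/-- Semantics `⟦φ⟧`. -/
def Sat (Tr : Proc → Act → Proc → Prop) (τ : Act) (p : Proc) : Formula Act τ → Prop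
  | .delayed χ => ∃ p', Star Tr τ p p' ∧ SatD Tr τ p' χ
  | .conj _ ps => ∀ i, SatC Tr τ p (ps i)

/-- Semantics `⟦χ⟧^ε` of delayed formulas. -/
def SatD (Tr : Proc → Act → Proc → Prop) (τ : Act) (p : Proc) : DFormula Act τ → Prop
  | .obs a _ φ => ∃ p', Tr p a p' ∧ Sat Tr τ p' φ
  | .conj _ ps => ∀ i, SatC Tr τ p (ps i)
  | .stableConj _ ps => Stable Tr τ p ∧ ∀ i, SatC Tr τ p (ps i)
  | .branchConj α φ _ ps =>
      (∃ p', OptStep Tr τ p α p' ∧ Sat Tr τ p' φ) ∧ ∀ i, SatC Tr τ p (ps i)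

/-- Semantics `⟦ψ⟧^∧` of conjuncts. -/
def SatC (Tr : Proc → Act → Proc → Prop) (τ : Act) (p : Proc) : Conjunct Act τ → Prop
  | .pos χ => ∃ p', Star Tr τ p p' ∧ SatD Tr τ p' χ
  | .neg χ => ¬ ∃ p', Star Tr τ p p' ∧ SatD Tr τ p' χ
end

/-- `φ` distinguishes `p` from the set `Q`. -/
def Distinguishes (Tr : Proc → Act → Proc → Prop) (τ : Act) (φ : Formula Act τ)
    (p : Proc) (Q : Set Proc) : Prop :=
  Sat Tr τ p φ ∧ ∀ q ∈ Q, ¬ Sat Tr τ q φ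

/-- The delayed formula `χ` distinguishes `p` from the set `Q` w.r.t. `⟦·⟧^ε`. -/
def DistinguishesD (Tr : Proc → Act → Proc → Prop) (τ : Act) (χ : DFormula Act τ)
    (p : Proc) (Q : Set Proc) : Prop :=
  SatD Tr τ p χ ∧ ∀ q ∈ Q, ¬ SatD Tr τ q χ

/-- The conjunct `ψ` distinguishes `p` from `q` w.r.t. `⟦·⟧^∧`. -/
def DistinguishesC (Tr : Proc → Act → Proc → Prop) (τ : Act) (ψ : Conjunct Act τ)
    (p q : Proc) : Prop :=
  SatC Tr τ p ψ ∧ ¬ SatC Tr τ q ψ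

/-- Stability-respecting branching bisimulations: symmetric relations with the
branching-bisimulation transfer property and the stability-respecting
property. -/
def IsSRBBisim (Tr : Proc → Act → Proc → Prop) (τ : Act) (R : Proc → Proc → Prop) : Prop :=
  Symmetric R ∧
  (∀ p q, R p q → ∀ α p', Tr p α p' →
    (α = τ ∧ R p' q) ∨
      ∃ q' q'', Star Tr τ q q' ∧ Tr q' α q'' ∧ R p q' ∧ R p' q'') ∧
  (∀ p q, R p q → Stable Tr τ p →
    ∃ q', Star Tr τ q q' ∧ Stable Tr τ q' ∧ R p q')

end Semantics

/-! ### Expressiveness prices -/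

section Expr

variable {Act : Type} {τ : Act}

mutual
/-- Expressiveness price `expr` of formulas. -/
def exprF : Formula Act τ → Energy
  | .delayed χ => exprE χ
  | .conj I ps => ⨆ _ : Nonempty I, ((unitE 4 + unitE 2) + ⨆ i, exprC (ps i))

/-- Expressiveness price `expr^ε` of delayed formulas. -/
def exprE : DFormula Act τ → Energy
  | .obs _ _ φ => unitE 0 + exprF φ
  | .conj I ps => ⨆ _ : Nonempty I, (unitE 2 + ⨆ i, exprC (ps i))
  | .stableConj _ ps => unitE 3 + ⨆ i, exprC (ps i)
  | .branchConj _ φ _ ps =>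
      (unitE 1 + unitE 2) +
        (((unitE 0 + exprF φ) ⊔ onlyAt 5 (1 + exprF φ 0)) ⊔ ⨆ i, exprC (ps i))

/-- Expressiveness price `expr^∧` of conjuncts. -/
def exprC : Conjunct Act τ → Energy
  | .pos χ => exprE χ ⊔ onlyAt 5 (exprE χ 0)
  | .neg χ => (unitE 7 + exprE χ) ⊔ onlyAt 6 (exprE χ 0)
end

end Expr

/-! ### The weak spectroscopy energy game -/

/-- Positions of the weak spectroscopy game. -/
inductive GPos (Proc Act : Type) : Type
  | att (p : Proc) (Q : Set Proc)                                 -- `[p,Q]_a`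
  | attD (p : Proc) (Q : Set Proc)                                -- `[p,Q]^ε_a`
  | attC (p q : Proc)                                             -- `[p,q]^∧_a`
  | attB (p : Proc) (Q : Set Proc)                                -- `[p,Q]^η_a`
  | defC (p : Proc) (Q : Set Proc)                                -- `(p,Q)_d`
  | defS (p : Proc) (Q : Set Proc)                                -- `(p,Q)^s_d`
  | defB (p : Proc) (α : Act) (p' : Proc) (Q Qa : Set Proc)       -- `(p,α,p',Q,Qa)^η_d`

/-- The zero update. -/
def zeroU : Update := fun _ => UpdComp.zero

/-- The update `-ê_i`. -/
def decU (i : Fin 8) : Update := fun k => if k = i then UpdComp.decr else UpdComp.zero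

/-- The update `(min_{1,6},0,0,0,0,0,0,0)`. -/
def minU16 : Update := fun k => if k = 0 then UpdComp.minWith {5} else UpdComp.zero

/-- The update `(min_{1,7},0,0,0,0,0,0,-1)`. -/
def minU17dec8 : Update := fun k =>
  if k = 0 then UpdComp.minWith {6} else if k = 7 then UpdComp.decr else UpdComp.zero

/-- The update `(0,-1,-1,0,0,0,0,0)`. -/
def dec23 : Update := fun k => if k = 1 ∨ k = 2 then UpdComp.decr else UpdComp.zero

/-- The update `(min_{1,6},-1,-1,0,0,0,0,0)`. -/
def minU16dec23 : Update := fun k =>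
  if k = 0 then UpdComp.minWith {5}
  else if k = 1 ∨ k = 2 then UpdComp.decr else UpdComp.zero

section Game

variable {Proc Act : Type}

/-- Moves of the weak spectroscopy game. -/
inductive GMove (Tr : Proc → Act → Proc → Prop) (τ : Act) :
    GPos Proc Act → Update → GPos Proc Act → Prop
  | delay {p : Proc} {Q Q' : Set Proc} :
      SetStar Tr τ Q Q' →
      GMove Tr τ (.att p Q) zeroU (.attD p Q')
  | procrastination {p p' : Proc} {Q : Set Proc} :
      Tr p τ p' → p ≠ p' →
      GMove Tr τ (.attD p Q) zeroU (.attD p' Q)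
  | observation {p p' : Proc} {a : Act} {Q Q' : Set Proc} :
      Tr p a p' → a ≠ τ → SetStep Tr Q a Q' →
      GMove Tr τ (.attD p Q) (decU 0) (.att p' Q')
  | finishing {p : Proc} :
      GMove Tr τ (.att p ∅) zeroU (.defC p ∅)
  | immediateConj {p : Proc} {Q : Set Proc} :
      Q ≠ ∅ →
      GMove Tr τ (.att p Q) (decU 4) (.defC p Q)
  | lateConj {p : Proc} {Q : Set Proc} :
      GMove Tr τ (.attD p Q) zeroU (.defC p Q)
  | conjAnswer {p q : Proc} {Q : Set Proc} :
      q ∈ Q →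
      GMove Tr τ (.defC p Q) (decU 2) (.attC p q)
  | posConjunct {p q : Proc} {Q : Set Proc} :
      SetStar Tr τ {q} Q →
      GMove Tr τ (.attC p q) minU16 (.attD p Q)
  | negConjunct {p q : Proc} {Q : Set Proc} :
      SetStar Tr τ {p} Q → p ≠ q →
      GMove Tr τ (.attC p q) minU17dec8 (.attD q Q)
  | stableConj {p : Proc} {Q : Set Proc} :
      Stable Tr τ p →
      GMove Tr τ (.attD p Q) zeroU (.defS p {q ∈ Q | Stable Tr τ q})
  | conjStableAnswer {p q : Proc} {Q : Set Proc} :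
      q ∈ Q →
      GMove Tr τ (.defS p Q) (decU 3) (.attC p q)
  | stableFinishing {p : Proc} :
      GMove Tr τ (.defS p ∅) (decU 3) (.defC p ∅)
  | branchConj {p p' : Proc} {α : Act} {Q Qa : Set Proc} :
      OptStep Tr τ p α p' → Qa ⊆ Q →
      GMove Tr τ (.attD p Q) zeroU (.defB p α p' (Q \ Qa) Qa)
  | branchAnswer {p p' q : Proc} {α : Act} {Q Qa : Set Proc} :
      q ∈ Q →
      GMove Tr τ (.defB p α p' Q Qa) dec23 (.attC p q)
  | branchObservation {p p' : Proc} {α : Act} {Q Qa Q' : Set Proc} :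
      SetOpt Tr τ Qa α Q' →
      GMove Tr τ (.defB p α p' Q Qa) minU16dec23 (.attB p' Q')
  | branchAccounting {p : Proc} {Q : Set Proc} :
      GMove Tr τ (.attB p Q) (decU 0) (.att p Q)

/-- Defender positions of the weak spectroscopy game. -/
def isDefender : GPos Proc Act → Prop
  | .defC _ _ => True
  | .defS _ _ => True
  | .defB _ _ _ _ _ => True
  | _ => False

/-- The weak spectroscopy energy game `G△`. -/
def specGame (Tr : Proc → Act → Proc → Prop) (τ : Act) : EGame (GPos Proc Act) where
  defender := isDefender
  move := GMove Tr τ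

end Game

/-! ### Strategy formulas -/

section Strat

variable {Proc Act : Type}

mutual
/-- Attacker strategy formulas (formula sort). -/
inductive StratF (Tr : Proc → Act → Proc → Prop) (τ : Act) :
    GPos Proc Act → Energy → Formula Act τ → Prop
  | delay {p : Proc} {Q Q' : Set Proc} {u : Update} {e e' : Energy} {χ : DFormula Act τ} :
      GMove Tr τ (.att p Q) u (.attD p Q') →
      upd e u = some e' →
      (specGame Tr τ).Win (.attD p Q') e' →
      StratD Tr τ (.attD p Q') e' χ →
      StratF Tr τ (.att p Q) e (.delayed χ)
  | immediateConj {p : Proc} {Q : Set Proc} {u : Update} {e e' : Energy}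
      {I : Type} {ps : I → Conjunct Act τ} :
      GMove Tr τ (.att p Q) u (.defC p Q) →
      upd e u = some e' →
      (specGame Tr τ).Win (.defC p Q) e' →
      StratD Tr τ (.defC p Q) e' (.conj I ps) →
      StratF Tr τ (.att p Q) e (.conj I ps)

/-- Attacker strategy formulas (delayed-formula sort). -/
inductive StratD (Tr : Proc → Act → Proc → Prop) (τ : Act) :
    GPos Proc Act → Energy → DFormula Act τ → Prop
  | procrastination {p p' : Proc} {Q : Set Proc} {u : Update} {e e' : Energy}
      {χ : DFormula Act τ} :
      GMove Tr τ (.attD p Q) u (.attD p' Q) →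
      upd e u = some e' →
      (specGame Tr τ).Win (.attD p' Q) e' →
      StratD Tr τ (.attD p' Q) e' χ →
      StratD Tr τ (.attD p Q) e χ
  | observation {p p' : Proc} {a : Act} {Q Q' : Set Proc} {u : Update} {e e' : Energy}
      {φ : Formula Act τ} (ha : a ≠ τ) :
      GMove Tr τ (.attD p Q) u (.att p' Q') →
      Tr p a p' → SetStep Tr Q a Q' →
      upd e u = some e' →
      (specGame Tr τ).Win (.att p' Q') e' →
      StratF Tr τ (.att p' Q') e' φ →
      StratD Tr τ (.attD p Q) e (.obs a ha φ)
  | lateConj {p : Proc} {Q : Set Proc} {u : Update} {e e' : Energy} {χ : DFormula Act τ} :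
      GMove Tr τ (.attD p Q) u (.defC p Q) →
      upd e u = some e' →
      (specGame Tr τ).Win (.defC p Q) e' →
      StratD Tr τ (.defC p Q) e' χ →
      StratD Tr τ (.attD p Q) e χ
  | stable {p : Proc} {Q Q' : Set Proc} {u : Update} {e e' : Energy} {χ : DFormula Act τ} :
      GMove Tr τ (.attD p Q) u (.defS p Q') →
      upd e u = some e' →
      (specGame Tr τ).Win (.defS p Q') e' →
      StratD Tr τ (.defS p Q') e' χ →
      StratD Tr τ (.attD p Q) e χ
  | branch {p p' : Proc} {α : Act} {Q Q' Qa : Set Proc} {u : Update} {e e' : Energy}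
      {χ : DFormula Act τ} :
      GMove Tr τ (.attD p Q) u (.defB p α p' Q' Qa) →
      upd e u = some e' →
      (specGame Tr τ).Win (.defB p α p' Q' Qa) e' →
      StratD Tr τ (.defB p α p' Q' Qa) e' χ →
      StratD Tr τ (.attD p Q) e χ
  | conj {p : Proc} {Q : Set Proc} {e : Energy}
      (us : {q // q ∈ Q} → Update) (es : {q // q ∈ Q} → Energy)
      (ψs : {q // q ∈ Q} → Conjunct Act τ) :
      (∀ qq : {q // q ∈ Q}, GMove Tr τ (.defC p Q) (us qq) (.attC p qq.1)) →
      (∀ qq : {q // q ∈ Q}, upd e (us qq) = some (es qq)) →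
      (∀ qq : {q // q ∈ Q}, (specGame Tr τ).Win (.attC p qq.1) (es qq)) →
      (∀ qq : {q // q ∈ Q}, StratC Tr τ (.attC p qq.1) (es qq) (ψs qq)) →
      StratD Tr τ (.defC p Q) e (.conj {q // q ∈ Q} ψs)
  | stableConj {p : Proc} {Q : Set Proc} {e : Energy}
      (hne : Q.Nonempty)
      (us : {q // q ∈ Q} → Update) (es : {q // q ∈ Q} → Energy)
      (ψs : {q // q ∈ Q} → Conjunct Act τ) :
      (∀ qq : {q // q ∈ Q}, GMove Tr τ (.defS p Q) (us qq) (.attC p qq.1)) →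
      (∀ qq : {q // q ∈ Q}, upd e (us qq) = some (es qq)) →
      (∀ qq : {q // q ∈ Q}, (specGame Tr τ).Win (.attC p qq.1) (es qq)) →
      (∀ qq : {q // q ∈ Q}, StratC Tr τ (.attC p qq.1) (es qq) (ψs qq)) →
      StratD Tr τ (.defS p Q) e (.stableConj {q // q ∈ Q} ψs)
  | stableFinish {p : Proc} {u : Update} {e e' : Energy} :
      GMove Tr τ (.defS p ∅) u (.defC p ∅) →
      upd e u = some e' →
      (specGame Tr τ).Win (.defC p (∅ : Set Proc)) e' →
      StratD Tr τ (.defS p ∅) e (.stableConj Empty fun x => x.elim)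
  | branchConj {p p' : Proc} {α : Act} {Q Qa Q' : Set Proc} {ua ua' : Update}
      {e e1 ea : Energy} {φa : Formula Act τ}
      (us : {q // q ∈ Q} → Update) (es : {q // q ∈ Q} → Energy)
      (ψs : {q // q ∈ Q} → Conjunct Act τ) :
      GMove Tr τ (.defB p α p' Q Qa) ua (.attB p' Q') →
      GMove Tr τ (.attB p' Q') ua' (.att p' Q') →
      upd e ua = some e1 →
      upd e1 ua' = some ea →
      (specGame Tr τ).Win (.att p' Q') ea →
      StratF Tr τ (.att p' Q') ea φa →
      (∀ qq : {q // q ∈ Q}, GMove Tr τ (.defB p α p' Q Qa) (us qq) (.attC p qq.1)) →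
      (∀ qq : {q // q ∈ Q}, upd e (us qq) = some (es qq)) →
      (∀ qq : {q // q ∈ Q}, (specGame Tr τ).Win (.attC p qq.1) (es qq)) →
      (∀ qq : {q // q ∈ Q}, StratC Tr τ (.attC p qq.1) (es qq) (ψs qq)) →
      StratD Tr τ (.defB p α p' Q Qa) e (.branchConj α φa {q // q ∈ Q} ψs)

/-- Attacker strategy formulas (conjunct sort). -/
inductive StratC (Tr : Proc → Act → Proc → Prop) (τ : Act) :
    GPos Proc Act → Energy → Conjunct Act τ → Prop
  | pos {p q : Proc} {Q' : Set Proc} {u : Update} {e e' : Energy} {χ : DFormula Act τ} :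
      GMove Tr τ (.attC p q) u (.attD p Q') →
      upd e u = some e' →
      (specGame Tr τ).Win (.attD p Q') e' →
      StratD Tr τ (.attD p Q') e' χ →
      StratC Tr τ (.attC p q) e (.pos χ)
  | neg {p q : Proc} {P' : Set Proc} {u : Update} {e e' : Energy} {χ : DFormula Act τ} :
      GMove Tr τ (.attC p q) u (.attD q P') →
      upd e u = some e' →
      (specGame Tr τ).Win (.attD q P') e' →
      StratD Tr τ (.attD q P') e' χ →
      StratC Tr τ (.attC p q) e (.neg χ)
end

end Strat


section Helpers
variable {Proc Act : Type} {Tr : Proc → Act → Proc → Prop} {τ : Act}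

lemma upd_eq_some (e : Energy) (u : Update) (h : ∀ k, u k = UpdComp.decr → e k ≠ 0) :
    upd e u = some (fun k => match u k with
      | .decr => e k - 1
      | .zero => e k
      | .minWith D => (insert k D).inf e) := if_pos h

lemma upd_zeroU (e : Energy) : upd e zeroU = some e := by
  rw [upd_eq_some e zeroU (fun k hk => by simp [zeroU] at hk)]
  congr 1

lemma upd_mono {e f : Energy} {u : Update} {e' : Energy} (hef : e ≤ f)
    (h : upd e u = some e') : ∃ f', upd f u = some f' ∧ e' ≤ f' := by
  unfold upd at h
  split at h
  case isFalse => exact absurd h (by simp)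
  case isTrue hcond =>
    have hcond' : ∀ k, u k = UpdComp.decr → f k ≠ 0 := by
      intro k hk h0
      exact hcond k hk (le_antisymm (h0 ▸ hef k) zero_le)
    refine ⟨_, upd_eq_some f u hcond', ?_⟩
    injection h with h
    subst h
    intro k
    cases hu : u k with
    | decr => simp only [hu]; exact tsub_le_tsub_right (hef k) 1
    | zero => simp only [hu]; exact hef k
    | minWith D => simp only [hu]; exact Finset.inf_mono_fun (fun i _ => hef i)

theorem EGame.Win.mono {Pos : Type} {G : EGame Pos} {g : Pos} {e f : Energy}
    (h : G.Win g e) (hef : e ≤ f) : G.Win g f := by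
  induction h generalizing f with
  | attack hd hm hu _ ih =>
    obtain ⟨f', hf', hle⟩ := upd_mono hef hu
    exact .attack hd hm hf' (ih hle)
  | defend hd hu _ ih =>
    refine .defend hd (fun u g' hm => ?_) (fun u g' f' hm hf' => ?_)
    · obtain ⟨e', he'⟩ := Option.ne_none_iff_exists'.mp (hu u g' hm)
      obtain ⟨f', hf', _⟩ := upd_mono hef he'
      simp [hf']
    · obtain ⟨e', he'⟩ := Option.ne_none_iff_exists'.mp (hu u g' hm)
      obtain ⟨f'', hf'', hle⟩ := upd_mono hef he'
      have : f'' = f' := by rw [hf''] at hf'; exact Option.some.inj hf'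
      exact ih u g' e' hm he' (this ▸ hle)

end Helpers
section Helpers2
variable {Proc Act : Type} {Tr : Proc → Act → Proc → Prop} {τ : Act}

lemma sat_delayed (p : Proc) (χ : DFormula Act τ) :
    Sat Tr τ p (.delayed χ) ↔ ∃ p', Star Tr τ p p' ∧ SatD Tr τ p' χ := by
  rw [Sat]

lemma exprF_delayed (χ : DFormula Act τ) : exprF (Formula.delayed χ) = exprE χ := by
  rw [exprF]

lemma no_move_defC_empty {p : Proc} {u : Update} {g' : GPos Proc Act} :
    ¬ GMove Tr τ (.defC p ∅) u g' := by
  intro h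
  cases h with
  | conjAnswer hq => exact hq

lemma win_defC_empty (p : Proc) (e : Energy) :
    (specGame Tr τ).Win (.defC p (∅ : Set Proc)) e :=
  .defend trivial (fun _ _ hm => absurd hm no_move_defC_empty)
    (fun _ _ _ hm => absurd hm no_move_defC_empty)

lemma win_att_empty (p : Proc) (e : Energy) :
    (specGame Tr τ).Win (.att p (∅ : Set Proc)) e :=
  .attack (fun h => h) (GMove.finishing) (upd_zeroU e) (win_defC_empty p e)

lemma win_procrast {p p' : Proc} {Q : Set Proc} {e : Energy}
    (hs : Star Tr τ p p') (hw : (specGame Tr τ).Win (.attD p' Q) e) :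
    (specGame Tr τ).Win (.attD p Q) e := by
  induction hs using Relation.ReflTransGen.head_induction_on with
  | refl => exact hw
  | head hstep _ ih =>
    rename_i a c _
    by_cases hac : a = c
    · rwa [hac]
    · exact .attack (fun h => h) (GMove.procrastination hstep hac) (upd_zeroU e) ih

end Helpers2
section Helpers3
variable {Proc Act : Type} {Tr : Proc → Act → Proc → Prop} {τ : Act}

lemma one_add_le_ne_zero {x y : ℕ∞} (h : 1 + y ≤ x) : x ≠ 0 := by
  intro h0; simp [h0, nonpos_iff_eq_zero] at h

lemma le_sub_one' {x y : ℕ∞} (h : 1 + y ≤ x) : y ≤ x - 1 :=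
  (ENat.addLECancellable_of_ne_top (by simp)).le_tsub_of_add_le_left h

lemma upd_decU (e : Energy) (i : Fin 8) (h : e i ≠ 0) :
    upd e (decU i) = some (fun k => if k = i then e k - 1 else e k) := by
  rw [upd_eq_some e (decU i) ?_]
  · congr 1; funext k; by_cases hk : k = i <;> simp [decU, hk]
  · intro k hk
    simp only [decU] at hk
    split at hk
    · next hki => exact hki ▸ h
    · exact absurd hk (by simp)

lemma upd_dec23 (e : Energy) (h1 : e 1 ≠ 0) (h2 : e 2 ≠ 0) :
    upd e dec23 = some (fun k => if k = 1 ∨ k = 2 then e k - 1 else e k) := by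
  rw [upd_eq_some e dec23 ?_]
  · congr 1; funext k; by_cases hk : k = 1 ∨ k = 2 <;> simp [dec23, hk]
  · intro k hk
    simp only [dec23] at hk
    split at hk
    · next hki => rcases hki with h | h <;> exact h ▸ ‹_›
    · exact absurd hk (by simp)

lemma upd_minU16 (e : Energy) :
    upd e minU16 = some (fun k => if k = 0 then e 0 ⊓ e 5 else e k) := by
  rw [upd_eq_some e minU16 ?_]
  · congr 1; funext k; by_cases hk : k = 0 <;> simp [minU16, hk]
  · intro k hk
    simp only [minU16] at hk
    split at hk <;> exact absurd hk (by simp)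

lemma upd_minU17dec8 (e : Energy) (h7 : e 7 ≠ 0) :
    upd e minU17dec8 = some
      (fun k => if k = 0 then e 0 ⊓ e 6 else if k = 7 then e k - 1 else e k) := by
  rw [upd_eq_some e minU17dec8 ?_]
  · congr 1; funext k
    by_cases hk : k = 0
    · simp [minU17dec8, hk]
    · by_cases hk7 : k = 7 <;> simp [minU17dec8, hk, hk7]
  · intro k hk
    simp only [minU17dec8] at hk
    split at hk
    · exact absurd hk (by simp)
    · split at hk
      · next hki => exact hki ▸ h7
      · exact absurd hk (by simp)

lemma upd_minU16dec23 (e : Energy) (h1 : e 1 ≠ 0) (h2 : e 2 ≠ 0) :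
    upd e minU16dec23 = some
      (fun k => if k = 0 then e 0 ⊓ e 5 else if k = 1 ∨ k = 2 then e k - 1 else e k) := by
  rw [upd_eq_some e minU16dec23 ?_]
  · congr 1; funext k
    by_cases hk : k = 0
    · simp [minU16dec23, hk]
    · by_cases hk12 : k = 1 ∨ k = 2 <;> simp [minU16dec23, hk, hk12]
  · intro k hk
    simp only [minU16dec23] at hk
    split at hk
    · exact absurd hk (by simp)
    · split at hk
      · next hki => rcases hki with h | h <;> exact h ▸ ‹_›
      · exact absurd hk (by simp)

end Helpers3
section Helpers4
variable {Proc Act : Type} {Tr : Proc → Act → Proc → Prop} {τ : Act}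

lemma win_defC {p : Proc} {Q : Set Proc} {e : Energy} (M : Energy)
    (he : unitE 2 + M ≤ e)
    (hwin : ∀ q ∈ Q, (specGame Tr τ).Win (.attC p q) M) :
    (specGame Tr τ).Win (.defC p Q) e := by
  have h2 : e 2 ≠ 0 := one_add_le_ne_zero (by simpa [unitE] using he 2)
  have hupd := upd_decU e 2 h2
  have hres : M ≤ fun k => if k = 2 then e k - 1 else e k := by
    intro k
    by_cases hk : k = 2
    · subst hk; simp only [if_pos rfl]
      exact le_sub_one' (by simpa [unitE] using he 2)
    · simp only [if_neg hk]
      calc M k = (unitE 2 + M) k := by simp [unitE, hk]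
        _ ≤ e k := he k
  refine .defend trivial (fun u g' hm => ?_) (fun u g' e' hm hup => ?_)
  · cases hm with | conjAnswer hq => simp [hupd]
  · cases hm with
    | conjAnswer hq =>
      rw [hupd] at hup
      injection hup with hup
      exact (hwin _ hq).mono (hup ▸ hres)

lemma win_defS {p : Proc} {Q : Set Proc} {e : Energy} (M : Energy)
    (he : unitE 3 + M ≤ e)
    (hwin : ∀ q ∈ Q, (specGame Tr τ).Win (.attC p q) M) :
    (specGame Tr τ).Win (.defS p Q) e := by
  have h3 : e 3 ≠ 0 := one_add_le_ne_zero (by simpa [unitE] using he 3)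
  have hupd := upd_decU e 3 h3
  have hres : M ≤ fun k => if k = 3 then e k - 1 else e k := by
    intro k
    by_cases hk : k = 3
    · subst hk; simp only [if_pos rfl]
      exact le_sub_one' (by simpa [unitE] using he 3)
    · simp only [if_neg hk]
      calc M k = (unitE 3 + M) k := by simp [unitE, hk]
        _ ≤ e k := he k
  refine .defend trivial (fun u g' hm => ?_) (fun u g' e' hm hup => ?_)
  · cases hm with
    | conjStableAnswer hq => simp [hupd]
    | stableFinishing => simp [hupd]
  · cases hm with
    | conjStableAnswer hq =>
      rw [hupd] at hup
      injection hup with hup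
      exact (hwin _ hq).mono (hup ▸ hres)
    | stableFinishing => exact win_defC_empty _ _

lemma win_defB {p p' : Proc} {α : Act} {Q Qa : Set Proc} {e : Energy} (M F : Energy)
    (he : (unitE 1 + unitE 2) + (((unitE 0 + F) ⊔ onlyAt 5 (1 + F 0)) ⊔ M) ≤ e)
    (hwinC : ∀ q ∈ Q, (specGame Tr τ).Win (.attC p q) M)
    (hwinF : ∀ Q', SetOpt Tr τ Qa α Q' → (specGame Tr τ).Win (.att p' Q') F) :
    (specGame Tr τ).Win (.defB p α p' Q Qa) e := by
  set E : Energy := ((unitE 0 + F) ⊔ onlyAt 5 (1 + F 0)) ⊔ M with hE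
  have heE : ∀ k, ((unitE 1 + unitE 2) + E) k ≤ e k := he
  have hE1 : 1 + E 1 ≤ e 1 := by simpa [unitE] using heE 1
  have hE2 : 1 + E 2 ≤ e 2 := by simpa [unitE] using heE 2
  have hEk : ∀ k, k ≠ 1 → k ≠ 2 → E k ≤ e k := by
    intro k hk1 hk2
    calc E k = ((unitE 1 + unitE 2) + E) k := by simp [unitE, hk1, hk2]
      _ ≤ e k := heE k
  have h1 : e 1 ≠ 0 := one_add_le_ne_zero hE1
  have h2 : e 2 ≠ 0 := one_add_le_ne_zero hE2
  have hMF0 : 1 + F 0 ≤ E 0 := le_trans (by simp [unitE]) (le_trans le_sup_left le_sup_left)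
  have hMF5 : 1 + F 0 ≤ E 5 := le_trans (by simp [onlyAt]) (le_trans le_sup_right le_sup_left)
  have hFE : ∀ k, (unitE 0 + F) k ≤ E k := fun k => le_trans le_sup_left le_sup_left
  have hME : ∀ k, M k ≤ E k := fun k => le_sup_right
  -- result of dec23 dominates M
  have hresM : M ≤ fun k => if k = 1 ∨ k = 2 then e k - 1 else e k := by
    intro k
    by_cases hk : k = 1 ∨ k = 2
    · simp only [if_pos hk]
      rcases hk with hk | hk <;> subst hk
      · exact le_trans (hME 1) (le_sub_one' hE1)
      · exact le_trans (hME 2) (le_sub_one' hE2)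
    · push_neg at hk
      simp only [if_neg (not_or.mpr ⟨hk.1, hk.2⟩)]
      exact le_trans (hME k) (hEk k hk.1 hk.2)
  have hupd23 := upd_dec23 e h1 h2
  -- result of minU16dec23
  set r : Energy := fun k => if k = 0 then e 0 ⊓ e 5 else if k = 1 ∨ k = 2 then e k - 1 else e k
    with hr
  have hupd16 := upd_minU16dec23 e h1 h2
  have hr0 : 1 + F 0 ≤ r 0 := by
    simp only [hr, if_pos rfl, le_inf_iff]
    exact ⟨le_trans hMF0 (hEk 0 (by decide) (by decide)),
           le_trans hMF5 (hEk 5 (by decide) (by decide))⟩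
  have hr0ne : r 0 ≠ 0 := one_add_le_ne_zero hr0
  have hresF : F ≤ fun k => if k = 0 then r k - 1 else r k := by
    intro k
    by_cases hk0 : k = 0
    · subst hk0; simp only [if_pos rfl]
      exact le_sub_one' hr0
    · simp only [if_neg hk0, hr]
      by_cases hk : k = 1 ∨ k = 2
      · simp only [if_neg hk0, if_pos hk]
        have hFk : F k ≤ E k := le_trans (le_trans (by simp [unitE, hk0]) (hFE k)) le_rfl
        rcases hk with hk | hk <;> subst hk
        · exact le_trans hFk (le_sub_one' hE1)
        · exact le_trans hFk (le_sub_one' hE2)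
      · push_neg at hk
        simp only [if_neg hk0, if_neg (not_or.mpr ⟨hk.1, hk.2⟩)]
        exact le_trans (le_trans (by simp [unitE, hk0]) (hFE k)) (hEk k hk.1 hk.2)
  refine .defend trivial (fun u g' hm => ?_) (fun u g' e' hm hup => ?_)
  · cases hm with
    | branchAnswer hq => simp [hupd23]
    | branchObservation hQ' => simp [hupd16]
  · cases hm with
    | branchAnswer hq =>
      rw [hupd23] at hup
      injection hup with hup
      exact (hwinC _ hq).mono (hup ▸ hresM)
    | branchObservation hQ' =>
      rw [hupd16] at hup
      injection hup with hup
      subst hup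
      refine EGame.Win.attack (fun h => h) GMove.branchAccounting (upd_decU r 0 hr0ne) ?_
      exact (hwinF _ hQ').mono hresF
end Helpers4
section Helpers5
variable {Proc Act : Type} {Tr : Proc → Act → Proc → Prop} {τ : Act}

/-- The `↠`-closure of a set of processes. -/
def Dclo (Tr : Proc → Act → Proc → Prop) (τ : Act) (Q : Set Proc) : Set Proc :=
  {q' | ∃ q ∈ Q, Star Tr τ q q'}

lemma win_attD_empty (p : Proc) (e : Energy) :
    (specGame Tr τ).Win (.attD p (∅ : Set Proc)) e :=
  .attack (fun h => h) GMove.lateConj (upd_zeroU e) (win_defC_empty p e)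

end Helpers5

section Main
variable {Proc Act : Type}

mutual

theorem winF (Tr : Proc → Act → Proc → Prop) (τ : Act) (φ : Formula Act τ)
    (p : Proc) (Q : Set Proc) (hp : Sat Tr τ p φ)
    (hQ : ∀ q ∈ Q, ¬ Sat Tr τ q φ) :
    (specGame Tr τ).Win (.att p Q) (exprF φ) := by
  match φ with
  | .delayed χ =>
    rw [exprF]
    rw [Sat] at hp
    rcases Q.eq_empty_or_nonempty with rfl | _
    · exact win_att_empty p _
    · refine EGame.Win.attack (fun h => h)
        (GMove.delay (Q' := Dclo Tr τ Q) rfl) (upd_zeroU _) ?_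
      refine winF_delayed Tr τ χ p (Dclo Tr τ Q) hp ?_
      rintro q' ⟨q, hq, hs⟩ hsat
      exact hQ q hq (by rw [Sat]; exact ⟨q', hs, hsat⟩)
  | .conj I ps =>
    rcases Q.eq_empty_or_nonempty with rfl | ⟨q0, hq0⟩
    · exact win_att_empty p _
    · rw [Sat] at hp
      have hq0' := hQ q0 hq0
      rw [Sat] at hq0'
      obtain ⟨i0, _⟩ := not_forall.mp hq0'
      rw [exprF, iSup_pos ⟨i0⟩]
      set M : Energy := ⨆ i, exprC (ps i) with hM
      set e : Energy := (unitE 4 + unitE 2) + M with hecomp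
      have he4 : 1 + M 4 ≤ e 4 := by simp [hecomp, unitE]
      have h4 : e 4 ≠ 0 := one_add_le_ne_zero he4
      refine EGame.Win.attack (fun h => h)
        (GMove.immediateConj (Set.nonempty_iff_ne_empty.mp ⟨q0, hq0⟩))
        (upd_decU e 4 h4) ?_
      refine win_defC M ?_ ?_
      · intro k
        by_cases hk : k = 4
        · subst hk; simp only [if_pos rfl]
          calc (unitE 2 + M) 4 = M 4 := by simp [unitE]
            _ ≤ e 4 - 1 := le_sub_one' he4
        · simp only [if_neg hk]
          calc (unitE 2 + M) k = e k := by simp [hecomp, unitE, hk]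
            _ ≤ e k := le_rfl
      · intro q hq
        have hq' := hQ q hq
        rw [Sat] at hq'
        obtain ⟨i, hi⟩ := not_forall.mp hq'
        exact (winC Tr τ (ps i) p q (hp i) hi).mono (le_iSup (fun i => exprC (ps i)) i)

theorem winF_delayed (Tr : Proc → Act → Proc → Prop) (τ : Act) (χ : DFormula Act τ)
    (p : Proc) (Q : Set Proc)
    (hp : ∃ p', Star Tr τ p p' ∧ SatD Tr τ p' χ)
    (hQ : ∀ q ∈ Q, ¬ SatD Tr τ q χ) :
    (specGame Tr τ).Win (.attD p Q) (exprE χ) := by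
  obtain ⟨p', hstar, hsat⟩ := hp
  refine win_procrast hstar ?_
  match χ with
  | .obs a ha φ =>
    rw [SatD] at hsat
    obtain ⟨p'', hstep, hφ⟩ := hsat
    rw [exprE]
    set e : Energy := unitE 0 + exprF φ with hecomp
    have he0 : 1 + exprF φ 0 ≤ e 0 := by simp [hecomp, unitE]
    have h0 : e 0 ≠ 0 := one_add_le_ne_zero he0
    refine EGame.Win.attack (fun h => h)
      (GMove.observation (Q' := {q' | ∃ q ∈ Q, Tr q a q'}) hstep ha rfl)
      (upd_decU e 0 h0) ?_
    have hQ' : ∀ q' ∈ {q' | ∃ q ∈ Q, Tr q a q'}, ¬ Sat Tr τ q' φ := by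
      rintro q' ⟨q, hq, hstep'⟩ hsatq'
      exact hQ q hq (by rw [SatD]; exact ⟨q', hstep', hsatq'⟩)
    refine (winF Tr τ φ p'' _ hφ hQ').mono ?_
    intro k
    by_cases hk : k = 0
    · subst hk; simp only [if_pos rfl]
      exact le_sub_one' he0
    · simp only [if_neg hk]
      calc exprF φ k = e k := by simp [hecomp, unitE, hk]
        _ ≤ e k := le_rfl
  | .conj I ps =>
    rw [SatD] at hsat
    rcases Q.eq_empty_or_nonempty with rfl | ⟨q0, hq0⟩
    · exact win_attD_empty p' _
    · have hq0' := hQ q0 hq0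
      rw [SatD] at hq0'
      obtain ⟨i0, _⟩ := not_forall.mp hq0'
      rw [exprE, iSup_pos ⟨i0⟩]
      refine EGame.Win.attack (fun h => h) GMove.lateConj (upd_zeroU _) ?_
      refine win_defC (⨆ i, exprC (ps i)) le_rfl ?_
      intro q hq
      have hq' := hQ q hq
      rw [SatD] at hq'
      obtain ⟨i, hi⟩ := not_forall.mp hq'
      exact (winC Tr τ (ps i) p' q (hsat i) hi).mono (le_iSup (fun i => exprC (ps i)) i)
  | .stableConj I ps =>
    rw [SatD] at hsat
    obtain ⟨hstable, hsat⟩ := hsat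
    rw [exprE]
    refine EGame.Win.attack (fun h => h) (GMove.stableConj hstable) (upd_zeroU _) ?_
    refine win_defS (⨆ i, exprC (ps i)) le_rfl ?_
    rintro q ⟨hqQ, hqst⟩
    have hq' := hQ q hqQ
    rw [SatD] at hq'
    have : ¬ ∀ i, SatC Tr τ q (ps i) := fun h => hq' ⟨hqst, h⟩
    obtain ⟨i, hi⟩ := not_forall.mp this
    exact (winC Tr τ (ps i) p' q (hsat i) hi).mono (le_iSup (fun i => exprC (ps i)) i)
  | .branchConj α φa I ps =>
    rw [SatD] at hsat
    obtain ⟨⟨p'', hopt, hφa⟩, hconj⟩ := hsat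
    rw [exprE]
    refine EGame.Win.attack (fun h => h)
      (GMove.branchConj (Qa := {q ∈ Q | ∀ q', OptStep Tr τ q α q' → ¬ Sat Tr τ q' φa})
        hopt (Set.sep_subset _ _)) (upd_zeroU _) ?_
    refine win_defB (⨆ i, exprC (ps i)) (exprF φa) le_rfl ?_ ?_
    · rintro q ⟨hqQ, hqn⟩
      have hA : ∃ q', OptStep Tr τ q α q' ∧ Sat Tr τ q' φa := by
        by_contra hno
        push_neg at hno
        exact hqn ⟨hqQ, fun q' ho hs => hno q' ho hs⟩
      have hq' := hQ q hqQ
      rw [SatD] at hq'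
      have : ¬ ∀ i, SatC Tr τ q (ps i) := fun h => hq' ⟨hA, h⟩
      obtain ⟨i, hi⟩ := not_forall.mp this
      exact (winC Tr τ (ps i) p' q (hconj i) hi).mono (le_iSup (fun i => exprC (ps i)) i)
    · rintro Q' rfl
      refine winF Tr τ φa p'' _ hφa ?_
      rintro q' ⟨q, hq, ho⟩ hs
      exact hq.2 q' ho hs

theorem winC (Tr : Proc → Act → Proc → Prop) (τ : Act) (ψ : Conjunct Act τ)
    (p q : Proc) (hp : SatC Tr τ p ψ) (hq : ¬ SatC Tr τ q ψ) :
    (specGame Tr τ).Win (.attC p q) (exprC ψ) := by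
  match ψ with
  | .pos χ =>
    rw [SatC] at hp hq
    rw [exprC]
    set e : Energy := exprE χ ⊔ onlyAt 5 (exprE χ 0) with hecomp
    refine EGame.Win.attack (fun h => h)
      (GMove.posConjunct (Q := Dclo Tr τ {q}) rfl) (upd_minU16 e) ?_
    have hQ' : ∀ x ∈ Dclo Tr τ {q}, ¬ SatD Tr τ x χ := by
      rintro x ⟨y, hy, hs⟩ hsat
      exact hq ⟨x, Set.mem_singleton_iff.mp hy ▸ hs, hsat⟩
    refine (winF_delayed Tr τ χ p _ hp hQ').mono ?_
    intro k
    by_cases hk : k = 0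
    · subst hk; simp only [if_pos rfl]
      refine le_inf ?_ ?_
      · calc exprE χ 0 ≤ exprE χ 0 ⊔ onlyAt 5 (exprE χ 0) 0 := le_sup_left
          _ = e 0 := rfl
      · calc exprE χ 0 = onlyAt 5 (exprE χ 0) 5 := by simp [onlyAt]
          _ ≤ exprE χ 5 ⊔ onlyAt 5 (exprE χ 0) 5 := le_sup_right
          _ = e 5 := rfl
    · simp only [if_neg hk]
      calc exprE χ k ≤ exprE χ k ⊔ onlyAt 5 (exprE χ 0) k := le_sup_left
        _ = e k := rfl
  | .neg χ =>
    rw [SatC] at hp hq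
    rw [not_not] at hq
    have hpq : p ≠ q := fun h => hp (h ▸ hq)
    rw [exprC]
    set e : Energy := (unitE 7 + exprE χ) ⊔ onlyAt 6 (exprE χ 0) with hecomp
    have he7 : 1 + exprE χ 7 ≤ e 7 := by
      calc 1 + exprE χ 7 = (unitE 7 + exprE χ) 7 := by simp [unitE]
        _ ≤ (unitE 7 + exprE χ) 7 ⊔ onlyAt 6 (exprE χ 0) 7 := le_sup_left
        _ = e 7 := rfl
    have h7 : e 7 ≠ 0 := one_add_le_ne_zero he7
    refine EGame.Win.attack (fun h => h)
      (GMove.negConjunct (Q := Dclo Tr τ {p}) rfl hpq) (upd_minU17dec8 e h7) ?_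
    have hP' : ∀ x ∈ Dclo Tr τ {p}, ¬ SatD Tr τ x χ := by
      rintro x ⟨y, hy, hs⟩ hsat
      exact hp ⟨x, Set.mem_singleton_iff.mp hy ▸ hs, hsat⟩
    refine (winF_delayed Tr τ χ q _ hq hP').mono ?_
    intro k
    by_cases hk : k = 0
    · subst hk; simp only [if_pos rfl]
      refine le_inf ?_ ?_
      · calc exprE χ 0 = (unitE 7 + exprE χ) 0 := by simp [unitE]
          _ ≤ (unitE 7 + exprE χ) 0 ⊔ onlyAt 6 (exprE χ 0) 0 := le_sup_left
          _ = e 0 := rfl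
      · calc exprE χ 0 = onlyAt 6 (exprE χ 0) 6 := by simp [onlyAt]
          _ ≤ (unitE 7 + exprE χ) 6 ⊔ onlyAt 6 (exprE χ 0) 6 := le_sup_right
          _ = e 6 := rfl
    · by_cases hk7 : k = 7
      · subst hk7; simp only [if_neg hk, if_pos rfl]
        exact le_sub_one' he7
      · simp only [if_neg hk, if_neg hk7]
        calc exprE χ k = (unitE 7 + exprE χ) k := by simp [unitE, hk7]
          _ ≤ (unitE 7 + exprE χ) k ⊔ onlyAt 6 (exprE χ 0) k := le_sup_left
          _ = e k := rfl

end

end Main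

/-- if the delayed formula `χ` distinguishes `p` from a nonempty
`Q` closed under `↠`, then `expr^ε(χ)` is attacker-winning at `[p,Q]^ε_a`. -/
theorem distinction_price_in_win_delayed {Proc Act : Type} (Tr : Proc → Act → Proc → Prop)
    (τ : Act) (χ : DFormula Act τ) (p : Proc) (Q : Set Proc)
    (hQ : Q.Nonempty) (hcl : SetStar Tr τ Q Q)
    (h : DistinguishesD Tr τ χ p Q) :
    (specGame Tr τ).Win (.attD p Q) (exprE χ) :=
  winF_delayed Tr τ χ p Q ⟨p, Relation.ReflTransGen.refl, h.1⟩ h.2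

end Spectroscopy
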